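/- Let K = ℚ[a,d]/(a² + a + 1, d² + 1). The ℚ-linear trace map Tr: K → ℚ sends α + βa + γd + δad to 4α - 2β (equivalently, the trace of multiplication by an element of K). The symmetric ℚ-bilinear form (z,w) ↦ Tr(2 a d z w) on the 4-dimensional ℚ-vector space K is nondegenerate and its class in GW(ℚ) is 2ℍ = 2(⟨1⟩ + ⟨-1⟩). -/

import Mathlib

open Polynomial

/-- Normal form helper: `x + y·a + u·d + v·(a·d)` in any `ℚ`-algebra. -/
def NFaux (K : Type) [CommRing K] [Algebra ℚ K] (a d : K) (x y u v : ℚ) : K :=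
  algebraMap ℚ K x + algebraMap ℚ K y * a + algebraMap ℚ K u * d +
    algebraMap ℚ K v * (a * d)

/-- Coordinate change on `Fin 2 × Fin 2 → ℚ`. -/
def Tfun (c : Fin 2 × Fin 2 → ℚ) : Fin 2 × Fin 2 → ℚ := fun p =>
  ![![c (0,0) + 2*c (0,1) + 2*c (1,1), c (0,0) - 2*c (0,1) - 2*c (1,1)],
    ![c (1,0) + 2*c (0,1) - 4*c (1,1), c (1,0) - 2*c (0,1) + 4*c (1,1)]] p.1 p.2

/-- Inverse coordinate change. -/
def Sfun (c : Fin 2 × Fin 2 → ℚ) : Fin 2 × Fin 2 → ℚ := fun p =>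
  ![![(c (0,0) + c (0,1))/2, (2*(c (0,0) - c (0,1)) + (c (1,0) - c (1,1)))/12],
    ![(c (1,0) + c (1,1))/2, ((c (0,0) - c (0,1)) - (c (1,0) - c (1,1)))/12]] p.1 p.2

/-- `Tfun` as a linear equivalence. -/
def Tequiv : (Fin 2 × Fin 2 → ℚ) ≃ₗ[ℚ] (Fin 2 × Fin 2 → ℚ) where
  toFun := Tfun
  invFun := Sfun
  left_inv c := by
    funext p; obtain ⟨i, j⟩ := p
    fin_cases i <;> fin_cases j <;> simp [Tfun, Sfun] <;> ring
  right_inv c := by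
    funext p; obtain ⟨i, j⟩ := p
    fin_cases i <;> fin_cases j <;> simp [Tfun, Sfun] <;> ring
  map_add' x y := by
    funext p; obtain ⟨i, j⟩ := p
    fin_cases i <;> fin_cases j <;> simp [Tfun] <;> ring
  map_smul' m x := by
    funext p; obtain ⟨i, j⟩ := p
    fin_cases i <;> fin_cases j <;> simp [Tfun, smul_eq_mul] <;> ring

set_option maxHeartbeats 1000000 in
theorem stmt_5 :
    let K₁ := AdjoinRoot (X ^ 2 + X + 1 : Polynomial ℚ)
    let K := AdjoinRoot (X ^ 2 + 1 : Polynomial K₁)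
    let a : K := algebraMap K₁ K (AdjoinRoot.root _)
    let d : K := AdjoinRoot.root _
    (∀ α β γ δ : ℚ,
        Algebra.trace ℚ K (algebraMap ℚ K α + algebraMap ℚ K β * a +
          algebraMap ℚ K γ * d + algebraMap ℚ K δ * (a * d)) = 4 * α - 2 * β) ∧
    (∀ z : K, (∀ w : K, Algebra.trace ℚ K (2 * a * d * z * w) = 0) → z = 0) ∧
    ∃ e : K ≃ₗ[ℚ] (Fin 2 × Fin 2 → ℚ), ∀ z w : K,
      Algebra.trace ℚ K (2 * a * d * z * w) =
        ∑ m : Fin 2, (e z (m, 0) * e w (m, 0) - e z (m, 1) * e w (m, 1)) := by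
  intro K₁ K a d
  classical
  -- ring relations
  have ha : a ^ 2 = -a - 1 := by
    have h := AdjoinRoot.eval₂_root (X ^ 2 + X + 1 : Polynomial ℚ)
    simp only [eval₂_add, eval₂_pow, eval₂_X, eval₂_one] at h
    have h2 := congrArg (algebraMap K₁ K) h
    simp only [map_add, map_pow, map_one, map_zero] at h2
    linear_combination h2
  have hd : d ^ 2 = -1 := by
    have h := AdjoinRoot.eval₂_root (X ^ 2 + 1 : Polynomial K₁)
    simp only [eval₂_add, eval₂_pow, eval₂_X, eval₂_one] at h
    linear_combination h
  -- monicity and degrees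
  have hm1 : (X ^ 2 + X + 1 : Polynomial ℚ).Monic := by monicity!
  have hdim1 : (X ^ 2 + X + 1 : Polynomial ℚ).natDegree = 2 := by compute_degree!
  haveI : Nontrivial K₁ :=
    nontrivial_of_ne ((AdjoinRoot.powerBasis' hm1).basis
      ⟨0, by rw [AdjoinRoot.powerBasis'_dim, hdim1]; norm_num⟩) 0 (Module.Basis.ne_zero _ _)
  have hm2 : (X ^ 2 + 1 : Polynomial K₁).Monic := by monicity!
  have hdim2 : (X ^ 2 + 1 : Polynomial K₁).natDegree = 2 := by compute_degree!
  -- bases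
  let b₁ : Module.Basis (Fin 2) ℚ K₁ :=
    (AdjoinRoot.powerBasis' hm1).basis.reindex (finCongr (by rw [AdjoinRoot.powerBasis'_dim, hdim1]))
  let b₂ : Module.Basis (Fin 2) K₁ K :=
    (AdjoinRoot.powerBasis' hm2).basis.reindex (finCongr (by rw [AdjoinRoot.powerBasis'_dim, hdim2]))
  let β : Module.Basis (Fin 2 × Fin 2) ℚ K := b₁.smulTower b₂
  have hβ : ∀ i j : Fin 2, β (i, j) = a ^ (i : ℕ) * d ^ (j : ℕ) := by
    intro i j
    show (b₁.smulTower b₂) (i, j) = _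
    rw [Module.Basis.smulTower_apply, Module.Basis.reindex_apply, Module.Basis.reindex_apply,
      PowerBasis.basis_eq_pow, PowerBasis.basis_eq_pow, Algebra.smul_def, map_pow]
    simp [a, d]
  set φ := algebraMap ℚ K with hφ
  -- normal form facts
  have hNF : ∀ x y u v : ℚ, NFaux K a d x y u v =
      x • β (0,0) + y • β (1,0) + u • β (0,1) + v • β (1,1) := by
    intro x y u v
    rw [hβ, hβ, hβ, hβ]
    simp only [NFaux, Fin.val_zero, Fin.val_one, pow_zero, pow_one, mul_one, one_mul,
      Algebra.smul_def]
  have hrepr : ∀ (x y u v : ℚ) (i j : Fin 2),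
      β.repr (NFaux K a d x y u v) (i, j) = ![![x, u], ![y, v]] i j := by
    intro x y u v i j
    rw [hNF]
    simp only [map_add, map_smul, Module.Basis.repr_self, Finsupp.coe_add, Finsupp.coe_smul,
      Pi.add_apply, Pi.smul_apply, Finsupp.single_apply, smul_eq_mul]
    fin_cases i <;> fin_cases j <;> norm_num [Prod.ext_iff, Fin.ext_iff]
  have hmul : ∀ x1 y1 u1 v1 x2 y2 u2 v2 : ℚ,
      NFaux K a d x1 y1 u1 v1 * NFaux K a d x2 y2 u2 v2 =
      NFaux K a d (x1*x2 - y1*y2 - u1*u2 + v1*v2)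
        (x1*y2 + y1*x2 - y1*y2 - u1*v2 - v1*u2 + v1*v2)
        (x1*u2 + u1*x2 - y1*v2 - v1*y2)
        (x1*v2 + y1*u2 + u1*y2 + v1*x2 - y1*v2 - v1*y2) := by
    intro x1 y1 u1 v1 x2 y2 u2 v2
    simp only [NFaux, map_add, map_sub, map_mul, ← hφ]
    linear_combination (φ y1 * φ y2 - φ v1 * φ v2 + d * (φ v1 * φ y2 + φ y1 * φ v2)) * ha +
      (φ u1 * φ u2 + a * (φ v1 * φ u2 + φ u1 * φ v2) + a ^ 2 * (φ v1 * φ v2)) * hd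
  -- basis vectors in normal form
  have h00 : β (0,0) = NFaux K a d 1 0 0 0 := by rw [hNF]; simp
  have h10 : β (1,0) = NFaux K a d 0 1 0 0 := by rw [hNF]; simp
  have h01 : β (0,1) = NFaux K a d 0 0 1 0 := by rw [hNF]; simp
  have h11 : β (1,1) = NFaux K a d 0 0 0 1 := by rw [hNF]; simp
  -- the trace of a normal form element
  have htr : ∀ x y u v : ℚ, Algebra.trace ℚ K (NFaux K a d x y u v) = 4 * x - 2 * y := by
    intro x y u v
    rw [Algebra.trace_eq_matrix_trace β, Matrix.trace]
    rw [Fintype.sum_prod_type]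
    simp only [Matrix.diag_apply, Fin.sum_univ_two, Algebra.leftMulMatrix_eq_repr_mul]
    rw [h00, h10, h01, h11, hmul, hmul, hmul, hmul, hrepr, hrepr, hrepr, hrepr]
    norm_num
    ring
  -- every element is in normal form
  have hz : ∀ z : K, z = NFaux K a d (β.repr z (0,0)) (β.repr z (1,0))
      (β.repr z (0,1)) (β.repr z (1,1)) := by
    intro z
    refine β.ext_elem fun k => ?_
    obtain ⟨i, j⟩ := k
    rw [hrepr]
    fin_cases i <;> fin_cases j <;> simp
  have h2ad : (2 : K) * a * d = NFaux K a d 0 0 0 2 := by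
    simp only [NFaux, map_zero, map_ofNat, zero_add, zero_mul, add_zero]
    ring
  -- master trace formula for the bilinear form
  have key : ∀ x y u v x' y' u' v' : ℚ,
      Algebra.trace ℚ K (2 * a * d * NFaux K a d x y u v * NFaux K a d x' y' u' v') =
        4*x*u' + 4*x*v' + 4*y*u' - 8*y*v' + 4*u*x' + 4*u*y' + 4*v*x' - 8*v*y' := by
    intro x y u v x' y' u' v'
    rw [h2ad, hmul, hmul, htr]
    ring
  refine ⟨fun α β' γ δ => htr α β' γ δ, ?_, ?_⟩
  · -- nondegeneracy
    intro z hzw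
    have hzeq := hz z
    have e1 := hzw (NFaux K a d 1 0 0 0)
    have e2 := hzw (NFaux K a d 0 1 0 0)
    have e3 := hzw (NFaux K a d 0 0 1 0)
    have e4 := hzw (NFaux K a d 0 0 0 1)
    rw [hzeq, key] at e1 e2 e3 e4
    rw [hzeq]
    have c1 : β.repr z (0,0) = 0 := by linarith
    have c2 : β.repr z (1,0) = 0 := by linarith
    have c3 : β.repr z (0,1) = 0 := by linarith
    have c4 : β.repr z (1,1) = 0 := by linarith
    rw [c1, c2, c3, c4]
    simp [NFaux]
  · -- the explicit isometry with 2ℍ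
    refine ⟨(β.equivFun.trans Tequiv), fun z w => ?_⟩
    conv_lhs => rw [hz z, hz w]
    rw [key]
    simp only [LinearEquiv.trans_apply, Tequiv, LinearEquiv.coe_mk, Module.Basis.equivFun_apply,
      Fin.sum_univ_two]
    simp only [LinearMap.coe_mk, AddHom.coe_mk, Tfun, Matrix.cons_val', Matrix.cons_val_zero, Matrix.cons_val_one,
      Matrix.head_cons, Matrix.head_fin_const, Matrix.empty_val', Matrix.cons_val_fin_one]
    ring
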